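/- If P is a transitive 2-subgroup of Sym(A) with |A| > 1, then A can be partitioned as A = B₁ ∪ B₂ where B₁ and B₂ are disjoint P-blocks interchanged or fixed by each element of P, and the stabilizer of B₁ in P has index 2. -/

import Mathlib

/-- If `P` is a transitive `2`-subgroup of `Sym(A)` with `|A| > 1`, then `A` can be
partitioned as `A = B₁ ∪ B₂` where `B₁, B₂` are disjoint nonempty `P`-blocks which are
interchanged or fixed by each element of `P`, and the stabilizer of `B₁` in `P` has
index `2` (expressed as `|P| = 2 * |stabilizer|`). -/
theorem transitive_twoGroup_two_blocks {A : Type*} [Fintype A]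
    (P : Subgroup (Equiv.Perm A)) (hP : IsPGroup 2 P)
    (htrans : ∀ x y : A, ∃ σ ∈ P, σ x = y) (hA : 1 < Fintype.card A) :
    ∃ B₁ B₂ : Set A, B₁.Nonempty ∧ B₂.Nonempty ∧
      B₁ ∪ B₂ = Set.univ ∧ Disjoint B₁ B₂ ∧
      (∀ σ ∈ P, (σ '' B₁ = B₁ ∧ σ '' B₂ = B₂) ∨ (σ '' B₁ = B₂ ∧ σ '' B₂ = B₁)) ∧
      Nat.card P = 2 * Nat.card {σ : P // (σ : Equiv.Perm A) '' B₁ = B₁} := by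
  classical
  have : Fact (Nat.Prime 2) := ⟨Nat.prime_two⟩
  obtain ⟨a⟩ : Nonempty A := Fintype.card_pos_iff.mp (by omega)
  -- the stabilizer of `a` in `P`, as a subgroup of `↥P`
  set H : Subgroup ↥P :=
    { carrier := {σ : ↥P | (σ : Equiv.Perm A) a = a}
      one_mem' := rfl
      mul_mem' := by
        intro x y hx hy
        simp only [Set.mem_setOf_eq] at *
        simp [Subgroup.coe_mul, Equiv.Perm.mul_apply, hx, hy]
      inv_mem' := by
        intro x hx
        simp only [Set.mem_setOf_eq] at *
        conv_lhs => rw [← hx]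
        simp } with hHdef
  have memH : ∀ σ : ↥P, σ ∈ H ↔ (σ : Equiv.Perm A) a = a := fun σ => Iff.rfl
  -- H is a proper subgroup
  obtain ⟨b, hba⟩ := Fintype.exists_ne_of_one_lt_card hA a
  have hHne : H ≠ ⊤ := by
    obtain ⟨τ, hτP, hτ⟩ := htrans a b
    intro h
    have : (⟨τ, hτP⟩ : ↥P) ∈ H := h ▸ Subgroup.mem_top _
    rw [memH] at this
    exact hba (by rw [← hτ, this])
  obtain ⟨k, hk⟩ := hP.exists_card_eq
  obtain ⟨n, hn⟩ := (hP.to_subgroup H).exists_card_eq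
  have hnk : n < k := by
    by_contra h
    push_neg at h
    have h1 : Nat.card H ≤ Nat.card ↥P := Subgroup.card_le_card_group H
    have h2 : (2:ℕ)^k ≤ 2^n := Nat.pow_le_pow_right (by norm_num) h
    have : Nat.card H = Nat.card ↥P := by omega
    exact hHne (Subgroup.eq_top_of_card_eq H this)
  -- find a subgroup M of index 2 containing H
  obtain ⟨M, hMcard, hHM⟩ :=
    Sylow.exists_subgroup_card_pow_prime_le (G := ↥P) 2
      (show (2:ℕ)^(k-1) ∣ Nat.card ↥P by rw [hk]; exact pow_dvd_pow 2 (by omega))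
      H hn (by omega)
  have hMindex : M.index = 2 := by
    have h1 : M.index * Nat.card M = Nat.card ↥P := Subgroup.index_mul_card M
    rw [hMcard, hk] at h1
    have h2 : (2:ℕ)^k = 2 * 2^(k-1) := by
      rw [← pow_succ']
      congr 1
      omega
    have hpos : (0:ℕ) < 2^(k-1) := Nat.pow_pos (by norm_num)
    rw [h2] at h1
    exact Nat.eq_of_mul_eq_mul_right hpos h1
  -- key: membership in M only depends on the image of `a`
  have key : ∀ σ τ : ↥P, (σ : Equiv.Perm A) a = (τ : Equiv.Perm A) a →
      (σ ∈ M ↔ τ ∈ M) := by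
    intro σ τ h
    have hst : τ⁻¹ * σ ∈ H := by
      rw [memH]
      simp only [Subgroup.coe_mul, Subgroup.coe_inv, Equiv.Perm.mul_apply, h]
      simp
    have hstM : τ⁻¹ * σ ∈ M := hHM hst
    constructor
    · intro hσ
      have := M.mul_mem hσ (M.inv_mem hstM)
      simpa [mul_assoc] using this
    · intro hτ
      have := M.mul_mem hτ hstM
      simpa [← mul_assoc] using this
  set B₁ : Set A := {x : A | ∃ σ : ↥P, σ ∈ M ∧ (σ : Equiv.Perm A) a = x} with hB₁def
  have repr : ∀ x : A, ∃ σ : ↥P, (σ : Equiv.Perm A) a = x := by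
    intro x
    obtain ⟨σ, hσP, hσ⟩ := htrans a x
    exact ⟨⟨σ, hσP⟩, hσ⟩
  have mem₂ : ∀ σ : ↥P, ((σ : Equiv.Perm A) a ∈ B₁ ↔ σ ∈ M) := by
    intro σ
    constructor
    · rintro ⟨τ, hτM, hτ⟩
      exact (key σ τ hτ.symm).mpr hτM
    · intro h
      exact ⟨σ, h, rfl⟩
  have haB₁ : a ∈ B₁ := ⟨1, M.one_mem, rfl⟩
  -- B₂ is the complement
  refine ⟨B₁, B₁ᶜ, ⟨a, haB₁⟩, ?_, Set.union_compl_self B₁, disjoint_compl_right, ?_, ?_⟩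
  · -- B₁ᶜ nonempty
    rw [Set.nonempty_compl]
    intro h
    have : M = ⊤ := by
      rw [Subgroup.eq_top_iff']
      intro σ
      rw [← mem₂ σ, h]
      trivial
    rw [this, Subgroup.index_top] at hMindex
    omega
  · -- block swapping
    intro σ hσ
    set s : ↥P := ⟨σ, hσ⟩ with hsdef
    have hcase : (s ∈ M → σ '' B₁ = B₁) := by
      intro hsM
      apply Set.eq_of_subset_of_subset
      · rintro x ⟨y, ⟨τ, hτM, hτ⟩, rfl⟩
        have : ((s * τ : ↥P) : Equiv.Perm A) a = σ y := by
          simp only [Subgroup.coe_mul, Equiv.Perm.mul_apply, hτ]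
          rfl
        exact ⟨s * τ, M.mul_mem hsM hτM, this⟩
      · rintro x ⟨τ, hτM, hτ⟩
        refine ⟨((s⁻¹ * τ : ↥P) : Equiv.Perm A) a, ?_, ?_⟩
        · exact (mem₂ _).mpr (M.mul_mem (M.inv_mem hsM) hτM)
        · simp only [Subgroup.coe_mul, Subgroup.coe_inv, Equiv.Perm.mul_apply, hτ]
          simp [hsdef]
    have hcompl : σ '' B₁ᶜ = (σ '' B₁)ᶜ :=
      Set.image_compl_eq σ.bijective
    by_cases hsM : s ∈ M
    · left
      refine ⟨hcase hsM, ?_⟩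
      rw [hcompl, hcase hsM]
    · right
      have h1 : σ '' B₁ = B₁ᶜ := by
        apply Set.eq_of_subset_of_subset
        · rintro x ⟨y, ⟨τ, hτM, hτ⟩, rfl⟩
          intro hmem
          have : ((s * τ : ↥P) : Equiv.Perm A) a = σ y := by
            simp only [Subgroup.coe_mul, Equiv.Perm.mul_apply, hτ]
            rfl
          have hstM : s * τ ∈ M := (mem₂ _).mp (this ▸ hmem)
          rw [Subgroup.mul_mem_iff_of_index_two hMindex] at hstM
          exact hsM (hstM.mpr hτM)
        · intro x hx
          obtain ⟨ρ, hρ⟩ := repr x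
          have hρM : ρ ∉ M := fun h => hx (hρ ▸ (mem₂ ρ).mpr h)
          refine ⟨((s⁻¹ * ρ : ↥P) : Equiv.Perm A) a, ?_, ?_⟩
          · refine (mem₂ _).mpr ?_
            rw [Subgroup.mul_mem_iff_of_index_two hMindex]
            have hsinv : s⁻¹ ∉ M := fun h => hsM (by simpa using M.inv_mem h)
            exact iff_of_false hsinv hρM
          · simp only [Subgroup.coe_mul, Subgroup.coe_inv, Equiv.Perm.mul_apply, hρ]
            simp [hsdef]
      refine ⟨h1, ?_⟩
      rw [hcompl, h1, compl_compl]
  · -- cardinality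
    have hstab : ∀ σ : ↥P, ((σ : Equiv.Perm A) '' B₁ = B₁ ↔ σ ∈ M) := by
      intro σ
      constructor
      · intro h
        refine (mem₂ σ).mp ?_
        rw [← h]
        exact ⟨a, haB₁, rfl⟩
      · intro hsM
        apply Set.eq_of_subset_of_subset
        · rintro x ⟨y, ⟨τ, hτM, hτ⟩, rfl⟩
          refine ⟨σ * τ, M.mul_mem hsM hτM, ?_⟩
          simp only [Subgroup.coe_mul, Equiv.Perm.mul_apply, hτ]
        · rintro x ⟨τ, hτM, hτ⟩
          refine ⟨((σ⁻¹ * τ : ↥P) : Equiv.Perm A) a, ?_, ?_⟩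
          · exact (mem₂ _).mpr (M.mul_mem (M.inv_mem hsM) hτM)
          · simp only [Subgroup.coe_mul, Subgroup.coe_inv, Equiv.Perm.mul_apply, hτ]
            simp
    have hequiv : Nat.card {σ : ↥P // (σ : Equiv.Perm A) '' B₁ = B₁} = Nat.card M := by
      exact Nat.card_congr (Equiv.subtypeEquivRight hstab)
    rw [hequiv, ← Subgroup.index_mul_card M, hMindex]
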